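/- Let k be a field with char(k) ≠ 2, and let w = Σᵢ₌₁ⁿ aᵢxᵢ² be a diagonal quadratic form. In the differential graded algebra A = R⟨θ₁,…,θₙ,∂₁,…,∂ₙ⟩ of polynomial differential operators on R⟨θ₁,…,θₙ⟩ (R = k[[x₁,…,xₙ]]) with differential [δ,−] where δ = Σᵢ(xᵢ∂ᵢ + aᵢxᵢθᵢ), the elements ∂̄ᵢ = ∂ᵢ − aᵢθᵢ are cycles satisfying ∂̄ᵢ² = −aᵢ and ∂̄ᵢ∂̄ⱼ = −∂̄ⱼ∂̄ᵢ for i ≠ j; hence they generate a subalgebra of A^op isomorphic to the Clifford algebra Cl(w) of the quadratic form w. -/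

import Mathlib

set_option maxHeartbeats 1000000
set_option synthInstance.maxHeartbeats 200000

open CliffordAlgebra
open scoped TensorProduct

section ConjHom

variable {S : Type*} [Ring S]

/-- Conjugation by an invertible element, as a ring hom. -/
def conjHom (u v : S) (hvu : v * u = 1) (huv : u * v = 1) : S →+* S where
  toFun T := u * T * v
  map_one' := by simpa using huv
  map_mul' T T' := by
    simp only [mul_assoc]
    rw [← mul_assoc v u, hvu, one_mul]
  map_zero' := by simp
  map_add' T T' := by simp [mul_add, add_mul]

theorem conjHom_apply (u v : S) (hvu : v * u = 1) (huv : u * v = 1) (T : S) :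
    conjHom u v hvu huv T = u * T * v := rfl

theorem conjHom_injective (u v : S) (hvu : v * u = 1) (huv : u * v = 1) :
    Function.Injective (conjHom u v hvu huv) := by
  intro T T' h
  have h2 := congrArg (fun X => v * X * u) h
  simpa only [conjHom_apply, mul_assoc, ← mul_assoc v u, hvu, one_mul, huv, mul_one] using h2

theorem conjHom_smul {R : Type*} [CommSemiring R] [Algebra R S]
    (u v : S) (hvu : v * u = 1) (huv : u * v = 1) (r : R) (T : S) :
    conjHom u v hvu huv (r • T) = r • conjHom u v hvu huv T := by
  simp only [conjHom_apply, mul_smul_comm, smul_mul_assoc]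

end ConjHom

section EndConj

variable {R M N : Type*} [CommSemiring R] [AddCommMonoid M] [AddCommMonoid N]
  [Module R M] [Module R N]

/-- Conjugation by a linear equivalence, as a ring hom between endomorphism rings. -/
def endConj (e : M ≃ₗ[R] N) : Module.End R M →+* Module.End R N where
  toFun T := e.toLinearMap ∘ₗ T ∘ₗ e.symm.toLinearMap
  map_one' := by ext x; simp
  map_mul' T T' := by ext x; simp [Module.End.mul_apply]
  map_zero' := by ext x; simp
  map_add' T T' := by ext x; simp

theorem endConj_apply (e : M ≃ₗ[R] N) (T : Module.End R M) (x : N) :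
    endConj e T x = e (T (e.symm x)) := rfl

theorem endConj_injective (e : M ≃ₗ[R] N) : Function.Injective (endConj e) := by
  intro T T' h
  ext x
  have := congrArg (fun X : Module.End R N => X (e x)) h
  simpa [endConj_apply] using this

theorem endConj_smul (e : M ≃ₗ[R] N) (r : R) (T : Module.End R M) :
    endConj e (r • T) = r • endConj e T := by
  ext x; simp [endConj_apply]

end EndConj

theorem sum_sq_anticomm {S : Type*} [Ring S] {ι : Type*} [DecidableEq ι] (t : Finset ι)
    (s : ι → S) (h : ∀ i ∈ t, ∀ j ∈ t, i ≠ j → s i * s j + s j * s i = 0) :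
    (∑ i ∈ t, s i) * (∑ i ∈ t, s i) = ∑ i ∈ t, s i * s i := by
  induction t using Finset.induction_on with
  | empty => simp
  | @insert a t ha ih =>
    rw [Finset.sum_insert ha, Finset.sum_insert ha, add_mul, mul_add, mul_add]
    have hS : s a * ∑ i ∈ t, s i + (∑ i ∈ t, s i) * s a = 0 := by
      rw [Finset.mul_sum, Finset.sum_mul, ← Finset.sum_add_distrib]
      refine Finset.sum_eq_zero fun j hj => ?_
      exact h a (Finset.mem_insert_self a t) j (Finset.mem_insert_of_mem hj)
        (fun e => ha (e ▸ hj))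
    rw [ih fun i hi j hj hij =>
      h i (Finset.mem_insert_of_mem hi) j (Finset.mem_insert_of_mem hj) hij]
    calc s a * s a + s a * ∑ i ∈ t, s i + ((∑ i ∈ t, s i) * s a + ∑ i ∈ t, s i * s i)
        = s a * s a + (s a * ∑ i ∈ t, s i + (∑ i ∈ t, s i) * s a) + ∑ i ∈ t, s i * s i := by
          abel
      _ = s a * s a + ∑ i ∈ t, s i * s i := by rw [hS]; abel

theorem involute_contractLeft' {R M : Type*} [CommRing R] [AddCommGroup M] [Module R M]
    {Q : QuadraticForm R M} (d : Module.Dual R M) (x : CliffordAlgebra Q) :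
    involute (contractLeft d x) = - contractLeft d (involute x) := by
  induction x using CliffordAlgebra.left_induction with
  | algebraMap r => simp
  | add x y hx hy => simp only [map_add, hx, hy, neg_add]
  | ι_mul x m hx =>
    rw [contractLeft_ι_mul, map_sub, map_smul, map_mul, involute_ι, hx, map_mul, involute_ι]
    simp only [mul_neg, neg_mul, neg_neg, map_neg, contractLeft_ι_mul, neg_sub]

section Ops

variable (R : Type) [CommRing R] (n : ℕ)

/-- The "exterior algebra" `⋀ Rⁿ` realised as a Clifford algebra with zero form. -/
abbrev ExtAlg : Type := CliffordAlgebra (0 : QuadraticForm R (Fin n → R))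

/-- Exterior multiplication by the `i`-th basis vector. -/
noncomputable def thetaOp (i : Fin n) : Module.End R (ExtAlg R n) :=
  LinearMap.mulLeft R (ι (0 : QuadraticForm R (Fin n → R)) (Pi.single i 1))

/-- Contraction with the `i`-th coordinate. -/
noncomputable def delOp (i : Fin n) : Module.End R (ExtAlg R n) :=
  contractLeft ((Pi.basisFun R (Fin n)).coord i)

theorem coord_apply' (i : Fin n) (v : Fin n → R) :
    (Pi.basisFun R (Fin n)).coord i v = v i := by simp

theorem theta_mul_self (i : Fin n) : thetaOp R n i * thetaOp R n i = 0 := by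
  refine LinearMap.ext fun x => ?_
  simp only [Module.End.mul_apply, LinearMap.zero_apply, thetaOp, LinearMap.mulLeft_apply]
  rw [← mul_assoc, ι_sq_scalar]
  simp

theorem theta_swap (i j : Fin n) :
    thetaOp R n i * thetaOp R n j + thetaOp R n j * thetaOp R n i = 0 := by
  refine LinearMap.ext fun x => ?_
  simp only [LinearMap.add_apply, Module.End.mul_apply, LinearMap.zero_apply, thetaOp,
    LinearMap.mulLeft_apply]
  have ho : (0 : QuadraticForm R (Fin n → R)).IsOrtho (Pi.single i 1) (Pi.single j 1) := by
    simp [QuadraticMap.IsOrtho]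
  rw [← mul_assoc, ← mul_assoc, ← add_mul, ι_mul_ι_add_swap_of_isOrtho ho, zero_mul]

theorem del_mul_self (i : Fin n) : delOp R n i * delOp R n i = 0 := by
  refine LinearMap.ext fun x => ?_
  simp only [Module.End.mul_apply, LinearMap.zero_apply, delOp]
  rw [contractLeft_contractLeft]

theorem del_swap (i j : Fin n) :
    delOp R n i * delOp R n j + delOp R n j * delOp R n i = 0 := by
  refine LinearMap.ext fun x => ?_
  simp only [LinearMap.add_apply, Module.End.mul_apply, LinearMap.zero_apply, delOp]
  rw [contractLeft_comm]
  exact neg_add_cancel _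

theorem del_theta (i j : Fin n) :
    delOp R n i * thetaOp R n j + thetaOp R n j * delOp R n i
      = ((Pi.single j 1 : Fin n → R) i) • 1 := by
  refine LinearMap.ext fun x => ?_
  simp only [LinearMap.add_apply, Module.End.mul_apply, LinearMap.smul_apply,
    Module.End.one_apply, delOp, thetaOp, LinearMap.mulLeft_apply]
  rw [contractLeft_ι_mul, sub_add_cancel, coord_apply']

theorem del_theta_one (i : Fin n) :
    delOp R n i * thetaOp R n i + thetaOp R n i * delOp R n i = 1 := by
  rw [del_theta, Pi.single_eq_same, one_smul]

end Ops

theorem extNeg_mul {R : Type} [CommRing R] {n : ℕ} (A B : Module.End R (ExtAlg R n)) :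
    -A * B = -(A * B) := LinearMap.ext fun _ => rfl

theorem extMul_neg {R : Type} [CommRing R] {n : ℕ} (A B : Module.End R (ExtAlg R n)) :
    A * -B = -(A * B) := LinearMap.ext fun x => map_neg A (B x)

theorem extNeg_neg {R : Type} [CommRing R] {n : ℕ} (A : Module.End R (ExtAlg R n)) :
    - -A = A := LinearMap.ext fun x => neg_neg (A x)

section Swap

variable (R : Type) [CommRing R] (n : ℕ)

theorem exists_swapHom :
    ∃ Φ : Module.End R (ExtAlg R n) →+* Module.End R (ExtAlg R n),
      Function.Injective Φ ∧
      (∀ (r : R) (T : Module.End R (ExtAlg R n)), Φ (r • T) = r • Φ T) ∧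
      (∀ i, Φ (thetaOp R n i) = -(delOp R n i)) ∧
      (∀ i, Φ (delOp R n i) = -(thetaOp R n i)) := by
  classical
  set γ : Module.End R (ExtAlg R n) :=
    (involute (Q := (0 : QuadraticForm R (Fin n → R)))).toLinearMap with hγdef
  have hγγ : γ * γ = 1 := by
    refine LinearMap.ext fun x => ?_
    simp only [Module.End.mul_apply, Module.End.one_apply, hγdef, AlgHom.toLinearMap_apply]
    exact involute_involute x
  have hγθ : ∀ i, γ * thetaOp R n i = -(thetaOp R n i * γ) := by
    intro i
    refine LinearMap.ext fun x => ?_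
    simp only [Module.End.mul_apply, LinearMap.neg_apply, hγdef, AlgHom.toLinearMap_apply,
      thetaOp, LinearMap.mulLeft_apply]
    rw [map_mul, involute_ι, neg_mul]
  have hγD : ∀ i, γ * delOp R n i = -(delOp R n i * γ) := by
    intro i
    refine LinearMap.ext fun x => ?_
    simp only [Module.End.mul_apply, LinearMap.neg_apply, hγdef, AlgHom.toLinearMap_apply,
      delOp]
    rw [involute_contractLeft']
  set cc : Fin n → Module.End R (ExtAlg R n) := fun i => thetaOp R n i + delOp R n i
    with hccdef
  have hc2 : ∀ i, cc i * cc i = 1 := by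
    intro i
    show (thetaOp R n i + delOp R n i) * (thetaOp R n i + delOp R n i) = 1
    rw [add_mul, mul_add, mul_add, theta_mul_self, del_mul_self, zero_add, add_zero, add_comm]
    exact del_theta_one R n i
  have hcθ : ∀ i, cc i * thetaOp R n i * cc i = delOp R n i := by
    intro i
    have h1 : delOp R n i * thetaOp R n i = 1 - thetaOp R n i * delOp R n i := by
      rw [eq_sub_iff_add_eq]; exact del_theta_one R n i
    have h2 : cc i * thetaOp R n i = 1 - thetaOp R n i * delOp R n i := by
      show (thetaOp R n i + delOp R n i) * thetaOp R n i = _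
      rw [add_mul, theta_mul_self, zero_add, h1]
    have h3 : delOp R n i * cc i = 1 - thetaOp R n i * delOp R n i := by
      show delOp R n i * (thetaOp R n i + delOp R n i) = _
      rw [mul_add, del_mul_self, add_zero, h1]
    calc cc i * thetaOp R n i * cc i = (1 - thetaOp R n i * delOp R n i) * cc i := by rw [h2]
      _ = cc i - thetaOp R n i * (delOp R n i * cc i) := by rw [sub_mul, one_mul, mul_assoc]
      _ = cc i - thetaOp R n i * (1 - thetaOp R n i * delOp R n i) := by rw [h3]
      _ = cc i - thetaOp R n i := by
          rw [mul_sub, mul_one, ← mul_assoc, theta_mul_self, zero_mul, sub_zero]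
      _ = delOp R n i := by
          show thetaOp R n i + delOp R n i - thetaOp R n i = delOp R n i
          rw [add_sub_cancel_left]
  have hcD : ∀ i, cc i * delOp R n i * cc i = thetaOp R n i := by
    intro i
    have h1 : thetaOp R n i * delOp R n i = 1 - delOp R n i * thetaOp R n i := by
      rw [eq_sub_iff_add_eq, add_comm]; exact del_theta_one R n i
    have h2 : cc i * delOp R n i = 1 - delOp R n i * thetaOp R n i := by
      show (thetaOp R n i + delOp R n i) * delOp R n i = _
      rw [add_mul, del_mul_self, add_zero, h1]
    have h3 : thetaOp R n i * cc i = 1 - delOp R n i * thetaOp R n i := by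
      show thetaOp R n i * (thetaOp R n i + delOp R n i) = _
      rw [mul_add, theta_mul_self, zero_add, h1]
    calc cc i * delOp R n i * cc i = (1 - delOp R n i * thetaOp R n i) * cc i := by rw [h2]
      _ = cc i - delOp R n i * (thetaOp R n i * cc i) := by rw [sub_mul, one_mul, mul_assoc]
      _ = cc i - delOp R n i * (1 - delOp R n i * thetaOp R n i) := by rw [h3]
      _ = cc i - delOp R n i := by
          rw [mul_sub, mul_one, ← mul_assoc, del_mul_self, zero_mul, sub_zero]
      _ = thetaOp R n i := by
          show thetaOp R n i + delOp R n i - delOp R n i = thetaOp R n i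
          rw [add_sub_cancel_right]
  have hcθ_ne : ∀ i j, i ≠ j → cc j * thetaOp R n i = -(thetaOp R n i * cc j) := by
    intro i j hij
    have hz : delOp R n j * thetaOp R n i + thetaOp R n i * delOp R n j = 0 := by
      rw [del_theta, Pi.single_eq_of_ne hij.symm, zero_smul]
    apply eq_neg_of_add_eq_zero_left
    show (thetaOp R n j + delOp R n j) * thetaOp R n i
      + thetaOp R n i * (thetaOp R n j + delOp R n j) = 0
    rw [add_mul, mul_add, add_add_add_comm, theta_swap, hz, add_zero]
  have hcD_ne : ∀ i j, i ≠ j → cc j * delOp R n i = -(delOp R n i * cc j) := by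
    intro i j hij
    have hz : thetaOp R n j * delOp R n i + delOp R n i * thetaOp R n j = 0 := by
      rw [add_comm, del_theta, Pi.single_eq_of_ne hij, zero_smul]
    apply eq_neg_of_add_eq_zero_left
    show (thetaOp R n j + delOp R n j) * delOp R n i
      + delOp R n i * (thetaOp R n j + delOp R n j) = 0
    rw [add_mul, mul_add, add_add_add_comm, hz, del_swap, add_zero]
  have hvu : ∀ i, (γ * cc i) * (cc i * γ) = 1 := by
    intro i
    rw [mul_assoc, ← mul_assoc (cc i), hc2 i, one_mul, hγγ]
  have huv : ∀ i, (cc i * γ) * (γ * cc i) = 1 := by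
    intro i
    rw [mul_assoc, ← mul_assoc γ γ, hγγ, one_mul, hc2 i]
  set step : Fin n → (Module.End R (ExtAlg R n) →+* Module.End R (ExtAlg R n)) :=
    fun i => conjHom (cc i * γ) (γ * cc i) (hvu i) (huv i) with hstepdef
  have hγθγ : ∀ i, γ * thetaOp R n i * γ = -(thetaOp R n i) := by
    intro i
    rw [hγθ i, extNeg_mul, mul_assoc, hγγ, mul_one]
  have hγDγ : ∀ i, γ * delOp R n i * γ = -(delOp R n i) := by
    intro i
    rw [hγD i, extNeg_mul, mul_assoc, hγγ, mul_one]
  have hstep_eq : ∀ i T, step i T = cc i * (γ * T * γ) * cc i := by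
    intro i T
    show conjHom (cc i * γ) (γ * cc i) (hvu i) (huv i) T = cc i * (γ * T * γ) * cc i
    rw [conjHom_apply]
    simp only [mul_assoc]
  have hstepθ : ∀ i, step i (thetaOp R n i) = -(delOp R n i) := by
    intro i
    rw [hstep_eq, hγθγ, extMul_neg, extNeg_mul, hcθ i]
  have hstepD : ∀ i, step i (delOp R n i) = -(thetaOp R n i) := by
    intro i
    rw [hstep_eq, hγDγ, extMul_neg, extNeg_mul, hcD i]
  have hstepθ_ne : ∀ i j, i ≠ j → step j (thetaOp R n i) = thetaOp R n i := by
    intro i j hij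
    rw [hstep_eq, hγθγ, extMul_neg, extNeg_mul, hcθ_ne i j hij, extNeg_mul, extNeg_neg, mul_assoc,
      hc2 j, mul_one]
  have hstepD_ne : ∀ i j, i ≠ j → step j (delOp R n i) = delOp R n i := by
    intro i j hij
    rw [hstep_eq, hγDγ, extMul_neg, extNeg_mul, hcD_ne i j hij, extNeg_mul, extNeg_neg, mul_assoc,
      hc2 j, mul_one]
  have hstep_smul : ∀ j (r : R) (T : Module.End R (ExtAlg R n)),
      step j (r • T) = r • step j T := fun j r T => conjHom_smul _ _ _ _ r T
  have hstep_inj : ∀ j, Function.Injective (step j) :=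
    fun j => conjHom_injective _ _ _ _
  set ΦL : List (Fin n) → (Module.End R (ExtAlg R n) →+* Module.End R (ExtAlg R n)) :=
    fun l => l.foldr (fun j acc => (step j).comp acc) (RingHom.id _) with hΦLdef
  have hΦL_cons : ∀ (j : Fin n) (l : List (Fin n)) (T : Module.End R (ExtAlg R n)),
      ΦL (j :: l) T = step j (ΦL l T) := fun j l T => rfl
  have hfold : ∀ l : List (Fin n), l.Nodup → ∀ i,
      ((i ∈ l → ΦL l (thetaOp R n i) = -(delOp R n i)) ∧
        (i ∉ l → ΦL l (thetaOp R n i) = thetaOp R n i)) ∧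
      ((i ∈ l → ΦL l (delOp R n i) = -(thetaOp R n i)) ∧
        (i ∉ l → ΦL l (delOp R n i) = delOp R n i)) := by
    intro l
    induction l with
    | nil =>
      intro _ i
      exact ⟨⟨fun h => absurd h (List.not_mem_nil), fun _ => rfl⟩,
        ⟨fun h => absurd h (List.not_mem_nil), fun _ => rfl⟩⟩
    | cons j l ih =>
      intro hnd i
      obtain ⟨hjl, hlnd⟩ := List.nodup_cons.mp hnd
      have ihi := ih hlnd i
      by_cases hijeq : i = j
      · subst hijeq
        refine ⟨⟨fun _ => ?_, fun hmem => absurd (List.mem_cons_self) hmem⟩,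
          ⟨fun _ => ?_, fun hmem => absurd (List.mem_cons_self) hmem⟩⟩
        · rw [hΦL_cons, ihi.1.2 hjl, hstepθ i]
        · rw [hΦL_cons, ihi.2.2 hjl, hstepD i]
      · refine ⟨⟨fun hmem => ?_, fun hmem => ?_⟩, ⟨fun hmem => ?_, fun hmem => ?_⟩⟩
        · have hil : i ∈ l := by
            rcases List.mem_cons.mp hmem with h | h
            · exact absurd h hijeq
            · exact h
          rw [hΦL_cons, ihi.1.1 hil, map_neg, hstepD_ne i j hijeq]
        · have hil : i ∉ l := fun h => hmem (List.mem_cons_of_mem _ h)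
          rw [hΦL_cons, ihi.1.2 hil, hstepθ_ne i j hijeq]
        · have hil : i ∈ l := by
            rcases List.mem_cons.mp hmem with h | h
            · exact absurd h hijeq
            · exact h
          rw [hΦL_cons, ihi.2.1 hil, map_neg, hstepθ_ne i j hijeq]
        · have hil : i ∉ l := fun h => hmem (List.mem_cons_of_mem _ h)
          rw [hΦL_cons, ihi.2.2 hil, hstepD_ne i j hijeq]
  have hΦ_smul : ∀ (l : List (Fin n)) (r : R) (T : Module.End R (ExtAlg R n)),
      ΦL l (r • T) = r • ΦL l T := by
    intro l
    induction l with
    | nil => intro r T; rfl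
    | cons j l ih =>
      intro r T
      rw [hΦL_cons, ih, hstep_smul, hΦL_cons]
  have hΦ_inj : ∀ l : List (Fin n), Function.Injective (ΦL l) := by
    intro l
    induction l with
    | nil => exact fun x y h => h
    | cons j l ih =>
      intro x y h
      exact ih (hstep_inj j h)
  refine ⟨ΦL (List.finRange n), hΦ_inj _, hΦ_smul _, fun i => ?_, fun i => ?_⟩
  · exact (hfold _ (List.nodup_finRange n) i).1.1 (List.mem_finRange i)
  · exact (hfold _ (List.nodup_finRange n) i).2.1 (List.mem_finRange i)

end Swap

section Emb

variable (k : Type) [Field k] (R : Type) [CommRing R] [Algebra k R] (n : ℕ) (a : Fin n → k)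

theorem exists_clifford_embedding (ε : R →ₗ[k] k) (hε : ε 1 = 1) :
    ∃ F : CliffordAlgebra (QuadraticMap.weightedSumSquares k (fun i => -(a i))) →+*
        Module.End R (ExtAlg R n),
      Function.Injective F ∧
      (∀ c : k, F (algebraMap k _ c) = algebraMap k R c • (1 : Module.End R (ExtAlg R n))) ∧
      (∀ i, F (ι (QuadraticMap.weightedSumSquares k (fun i => -(a i))) (Pi.single i 1))
        = delOp R n i - algebraMap k R (a i) • thetaOp R n i) := by
  classical
  obtain ⟨Φ, hΦ_inj, hΦ_smul, hΦθ, hΦD⟩ := exists_swapHom R n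
  -- the bilinear form and its quadratic form
  set Bf : LinearMap.BilinForm R (Fin n → R) :=
    ∑ j, (LinearMap.proj j : (Fin n → R) →ₗ[R] R).smulRight
      ((algebraMap k R (a j)) • (LinearMap.proj j : (Fin n → R) →ₗ[R] R)) with hBf
  have hBapply : ∀ v w : Fin n → R, Bf v w = ∑ j, v j * (algebraMap k R (a j) * w j) := by
    intro v w
    rw [hBf]
    simp only [LinearMap.coe_sum, Finset.sum_apply, LinearMap.smulRight_apply,
      LinearMap.proj_apply, LinearMap.smul_apply, smul_eq_mul]
  set Qf : QuadraticForm R (Fin n → R) := -Bf.toQuadraticMap with hQf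
  have hQapply : ∀ v, Qf v = -∑ j, v j * (algebraMap k R (a j) * v j) := by
    intro v
    rw [hQf, QuadraticMap.neg_apply, LinearMap.BilinMap.toQuadraticMap_apply, hBapply]
  have hh : Bf.toQuadraticMap = (0 : QuadraticForm R (Fin n → R)) - Qf := by
    rw [hQf, zero_sub, neg_neg]
  set ψ : CliffordAlgebra Qf ≃ₗ[R] ExtAlg R n := changeFormEquiv hh with hψdef
  have hψ : ∀ (v : Fin n → R) (x : ExtAlg R n), ψ (ι Qf v * ψ.symm x)
      = ι (0 : QuadraticForm R (Fin n → R)) v * x - contractLeft (Bf v) x := by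
    intro v x
    have h1 := changeForm_ι_mul (h := hh) v (ψ.symm x)
    have h2 : changeForm hh (ψ.symm x) = x := by
      rw [← changeFormEquiv_apply (h := hh)]
      exact ψ.apply_symm_apply x
    rw [h2] at h1
    exact h1
  have hBsingle : ∀ i, Bf (Pi.single i 1)
      = algebraMap k R (a i) • ((Pi.basisFun R (Fin n)).coord i) := by
    intro i
    refine LinearMap.ext fun w => ?_
    rw [hBapply]
    simp only [LinearMap.smul_apply, smul_eq_mul, coord_apply']
    rw [Finset.sum_eq_single i]
    · rw [Pi.single_eq_same, one_mul]
    · intro j _ hji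
      rw [Pi.single_eq_of_ne hji, zero_mul]
    · intro h; exact absurd (Finset.mem_univ i) h
  have hgen : ∀ i, endConj ψ ((Algebra.lmul R (CliffordAlgebra Qf)) (ι Qf (Pi.single i 1)))
      = thetaOp R n i - algebraMap k R (a i) • delOp R n i := by
    intro i
    refine LinearMap.ext fun x => ?_
    rw [endConj_apply]
    have h3 : (Algebra.lmul R (CliffordAlgebra Qf)) (ι Qf (Pi.single i 1)) (ψ.symm x)
        = ι Qf (Pi.single i 1) * ψ.symm x := rfl
    rw [h3, hψ, hBsingle i, map_smul]
    simp only [LinearMap.sub_apply, LinearMap.smul_apply, thetaOp, delOp,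
      LinearMap.mulLeft_apply]
  -- the algebra map from the Clifford algebra over k
  set L : (Fin n → k) →ₗ[k] (Fin n → R) :=
    LinearMap.pi (fun i => (Algebra.linearMap k R).comp (LinearMap.proj i)) with hLdef
  have hLapply : ∀ (m : Fin n → k) (j : Fin n), L m j = algebraMap k R (m j) :=
    fun m j => rfl
  have hLsingle : ∀ i, L (Pi.single i 1) = Pi.single i 1 := by
    intro i
    funext j
    rw [hLapply]
    rcases eq_or_ne j i with rfl | hne
    · rw [Pi.single_eq_same, Pi.single_eq_same, map_one]
    · rw [Pi.single_eq_of_ne hne, Pi.single_eq_of_ne hne, map_zero]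
  have hQL : ∀ m : Fin n → k, Qf (L m)
      = algebraMap k R ((QuadraticMap.weightedSumSquares k (fun i => -(a i))) m) := by
    intro m
    rw [hQapply, QuadraticMap.weightedSumSquares_apply, map_sum, ← Finset.sum_neg_distrib]
    refine Finset.sum_congr rfl fun j _ => ?_
    rw [hLapply, smul_eq_mul, map_mul, map_mul, map_neg]
    ring
  set f₁ : (Fin n → k) →ₗ[k] CliffordAlgebra Qf :=
    -(((ι Qf).restrictScalars k).comp L) with hf₁def
  have hf₁apply : ∀ m, f₁ m = -(ι Qf (L m)) := fun m => rfl
  have hf₁ : ∀ m, f₁ m * f₁ m = algebraMap k (CliffordAlgebra Qf)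
      ((QuadraticMap.weightedSumSquares k (fun i => -(a i))) m) := by
    intro m
    rw [hf₁apply, neg_mul_neg, ι_sq_scalar, hQL,
      IsScalarTower.algebraMap_apply k R (CliffordAlgebra Qf)]
  set g' : CliffordAlgebra (QuadraticMap.weightedSumSquares k (fun i => -(a i)))
      →ₐ[k] CliffordAlgebra Qf := CliffordAlgebra.lift _ ⟨f₁, hf₁⟩ with hg'def
  have hg'ι : ∀ i, g' (ι _ (Pi.single i 1)) = -(ι Qf (Pi.single i 1)) := by
    intro i
    rw [hg'def, lift_ι_apply, hf₁apply, hLsingle]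
  set F : CliffordAlgebra (QuadraticMap.weightedSumSquares k (fun i => -(a i))) →+*
      Module.End R (ExtAlg R n) :=
    (Φ.comp ((endConj ψ).comp ((Algebra.lmul R (CliffordAlgebra Qf)).toRingHom))).comp
      g'.toRingHom with hFdef
  have hFapply : ∀ x, F x = Φ (endConj ψ ((Algebra.lmul R (CliffordAlgebra Qf)) (g' x))) :=
    fun x => rfl
  have hFι : ∀ i, F (ι (QuadraticMap.weightedSumSquares k (fun i => -(a i)))
      (Pi.single i 1)) = delOp R n i - algebraMap k R (a i) • thetaOp R n i := by
    intro i
    rw [hFapply, hg'ι i, map_neg, map_neg, map_neg, hgen i, map_sub, hΦθ i, hΦ_smul, hΦD i]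
    rw [smul_neg, sub_neg_eq_add, neg_add, neg_neg, ← sub_eq_add_neg]
  have hFalg : ∀ c : k, F (algebraMap k _ c)
      = algebraMap k R c • (1 : Module.End R (ExtAlg R n)) := by
    intro c
    rw [hFapply, AlgHom.commutes, IsScalarTower.algebraMap_apply k R (CliffordAlgebra Qf),
      AlgHom.commutes, Module.algebraMap_end_eq_smul_id]
    rw [show ((algebraMap k R c) • LinearMap.id :
        Module.End R (CliffordAlgebra Qf)) = (algebraMap k R c) • 1 from rfl]
    rw [endConj_smul, map_one, hΦ_smul, map_one]
  -- injectivity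
  have hw : ∀ j, (QuadraticMap.weightedSumSquares k (fun i => -(a i))) (Pi.single j 1)
      = -(a j) := by
    intro j
    rw [QuadraticMap.weightedSumSquares_apply]
    rw [Finset.sum_eq_single j]
    · rw [Pi.single_eq_same, mul_one, smul_eq_mul, mul_one]
    · intro l _ hlj
      rw [Pi.single_eq_of_ne hlj, mul_zero, smul_zero]
    · intro h; exact absurd (Finset.mem_univ j) h
  have hpolar : ∀ i j, i ≠ j →
      ι (QuadraticMap.weightedSumSquares k (fun i => -(a i))) (Pi.single i 1) *
        ι _ (Pi.single j 1) +
      ι _ (Pi.single j 1) * ι _ (Pi.single i 1) = 0 := by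
    intro i j hij
    apply ι_mul_ι_add_swap_of_isOrtho
    show _ = _
    rw [QuadraticMap.weightedSumSquares_apply, QuadraticMap.weightedSumSquares_apply,
      QuadraticMap.weightedSumSquares_apply, ← Finset.sum_add_distrib]
    refine Finset.sum_congr rfl fun l _ => ?_
    rw [Pi.add_apply, ← smul_add]
    congr 1
    rcases eq_or_ne l i with rfl | hli
    · rw [Pi.single_eq_same, Pi.single_eq_of_ne hij]
      ring
    · rcases eq_or_ne l j with rfl | hlj
      · rw [Pi.single_eq_same, Pi.single_eq_of_ne hli]
        ring
      · rw [Pi.single_eq_of_ne hli, Pi.single_eq_of_ne hlj]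
        ring
  set W := CliffordAlgebra (QuadraticMap.weightedSumSquares k (fun i => -(a i))) with hWdef
  set f₂ : (Fin n → R) →ₗ[R] (R ⊗[k] W) :=
    -(∑ j, (LinearMap.proj j : (Fin n → R) →ₗ[R] R).smulRight
      ((1:R) ⊗ₜ[k] ι (QuadraticMap.weightedSumSquares k (fun i => -(a i)))
        (Pi.single j 1))) with hf₂def
  have hf₂apply : ∀ v, f₂ v = -(∑ j, v j •
      ((1:R) ⊗ₜ[k] ι (QuadraticMap.weightedSumSquares k (fun i => -(a i)))
        (Pi.single j 1))) := by
    intro v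
    rw [hf₂def]
    simp [LinearMap.smulRight_apply]
  have hf₂cond : ∀ v, f₂ v * f₂ v = algebraMap R (R ⊗[k] W) (Qf v) := by
    intro v
    rw [hf₂apply, neg_mul_neg, sum_sq_anticomm]
    · have hterm : ∀ j, (v j • ((1:R) ⊗ₜ[k]
          ι (QuadraticMap.weightedSumSquares k (fun i => -(a i))) (Pi.single j 1))) *
          (v j • ((1:R) ⊗ₜ[k]
          ι (QuadraticMap.weightedSumSquares k (fun i => -(a i))) (Pi.single j 1)))
          = (v j * v j * algebraMap k R (-(a j))) • (1 : R ⊗[k] W) := by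
        intro j
        rw [smul_mul_smul_comm, Algebra.TensorProduct.tmul_mul_tmul, one_mul, ι_sq_scalar,
          hw j, Algebra.algebraMap_eq_smul_one, TensorProduct.tmul_smul,
          ← Algebra.TensorProduct.one_def]
        conv_rhs => rw [mul_smul, algebraMap_smul]
      rw [Finset.sum_congr rfl (fun j _ => hterm j), ← Finset.sum_smul,
        Algebra.algebraMap_eq_smul_one]
      congr 1
      rw [hQapply, ← Finset.sum_neg_distrib]
      refine Finset.sum_congr rfl fun j _ => ?_
      rw [map_neg]
      ring
    · intro i _ j _ hij
      rw [smul_mul_smul_comm, smul_mul_smul_comm, mul_comm (v j) (v i), ← smul_add,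
        Algebra.TensorProduct.tmul_mul_tmul, Algebra.TensorProduct.tmul_mul_tmul, one_mul,
        ← TensorProduct.tmul_add, hpolar i j hij, TensorProduct.tmul_zero, smul_zero]
  set hBC : CliffordAlgebra Qf →ₐ[R] (R ⊗[k] W) :=
    CliffordAlgebra.lift Qf ⟨f₂, hf₂cond⟩ with hBCdef
  have hBCι : ∀ u, hBC (ι Qf u) = f₂ u := by
    intro u
    rw [hBCdef, lift_ι_apply]
  have hBCg : ∀ x, hBC (g' x) = 1 ⊗ₜ[k] x := by
    have heq : ((hBC.restrictScalars k).comp g')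
        = (Algebra.TensorProduct.includeRight :
            W →ₐ[k] R ⊗[k] W) := by
      refine CliffordAlgebra.hom_ext ?_
      refine LinearMap.ext fun m => ?_
      simp only [AlgHom.toLinearMap_apply, LinearMap.coe_comp, Function.comp_apply,
        AlgHom.coe_restrictScalars', AlgHom.coe_comp]
      rw [hg'def, lift_ι_apply, hf₁apply, map_neg, hBCι, hf₂apply, neg_neg]
      rw [Algebra.TensorProduct.includeRight_apply]
      have hm : m = ∑ j, Pi.single j (m j) := by
        rw [Finset.univ_sum_single]
      conv_rhs => rw [hm]
      rw [map_sum, TensorProduct.tmul_sum]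
      refine Finset.sum_congr rfl fun j _ => ?_
      rw [hLapply]
      have : Pi.single j (m j) = m j • (Pi.single j 1 : Fin n → k) := by
        rw [← Pi.single_smul, smul_eq_mul, mul_one]
      rw [this, map_smul, TensorProduct.tmul_smul, algebraMap_smul]
    intro x
    have := AlgHom.congr_fun heq x
    simpa using this
  set ρ : (R ⊗[k] W) →ₗ[k] W :=
    (TensorProduct.lid k W).toLinearMap.comp (TensorProduct.map ε LinearMap.id) with hρdef
  have hρ : ∀ x : W, ρ (1 ⊗ₜ[k] x) = x := by
    intro x
    rw [hρdef]
    simp only [LinearMap.coe_comp, Function.comp_apply, TensorProduct.map_tmul,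
      LinearEquiv.coe_toLinearMap, TensorProduct.lid_tmul, LinearMap.id_apply, hε, one_smul]
  have hg'inj : Function.Injective g' := by
    intro x y hxy
    have h1 : (1:R) ⊗ₜ[k] x = 1 ⊗ₜ[k] y := by
      rw [← hBCg, ← hBCg, hxy]
    have h2 := congrArg ρ h1
    rwa [hρ, hρ] at h2
  have hlmul_inj : Function.Injective (Algebra.lmul R (CliffordAlgebra Qf)) := by
    intro x y hxy
    have := congrArg (fun T : Module.End R (CliffordAlgebra Qf) => T 1) hxy
    simpa using this
  refine ⟨F, ?_, hFalg, hFι⟩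
  intro x y hxy
  exact hg'inj (hlmul_inj (endConj_injective ψ (hΦ_inj hxy)))

end Emb

theorem smul_sub_mul_expand {R S : Type*} [CommSemiring R] [Ring S] [Algebra R S]
    (A B C D : S) (b d : R) :
    (A - b • B) * (C - d • D) = A*C - d•(A*D) - b•(B*C) + (b*d)•(B*D) := by
  simp only [sub_mul, mul_sub, mul_smul_comm, smul_mul_assoc, smul_smul, smul_sub]
  rw [mul_comm d b]
  abel

theorem clifford_relations_in_stabilized_endomorphism_algebra
    (k : Type) [Field k] (hchar : (2 : k) ≠ 0) (n : ℕ) (a : Fin n → k) :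
    let R := MvPowerSeries (Fin n) k
    let E := CliffordAlgebra (0 : QuadraticForm R (Fin n → R))
    let θ : Fin n → Module.End R E := fun i =>
      LinearMap.mulLeft R (ι (0 : QuadraticForm R (Fin n → R)) (Pi.single i 1))
    let Dop : Fin n → Module.End R E := fun i =>
      contractLeft ((Pi.basisFun R (Fin n)).coord i)
    let δ : Module.End R E := ∑ i, ((MvPowerSeries.X i : R) • Dop i +
      ((algebraMap k R (a i)) * MvPowerSeries.X i) • θ i)
    let Dbar : Fin n → Module.End R E := fun i => Dop i - (algebraMap k R (a i)) • θ i
    (∀ i, δ * Dbar i + Dbar i * δ = 0) ∧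
    (∀ i, Dbar i * Dbar i = algebraMap k R (-(a i)) • (1 : Module.End R E)) ∧
    (∀ i j, i ≠ j → Dbar i * Dbar j = -(Dbar j * Dbar i)) ∧
    ∃ F : CliffordAlgebra (QuadraticMap.weightedSumSquares k (fun i => -(a i))) →+*
        Module.End R E,
      Function.Injective F ∧
      (∀ c : k, F (algebraMap k _ c) = algebraMap k R c • (1 : Module.End R E)) ∧
      (∀ i, F (CliffordAlgebra.ι (QuadraticMap.weightedSumSquares k (fun i => -(a i)))
        (Pi.single i 1)) = Dbar i) := by
  intro R E θ Dop δ Dbar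
  have hθθ0 : ∀ i, θ i * θ i = 0 := by
    intro i
    refine LinearMap.ext fun x => ?_
    simp only [Module.End.mul_apply, LinearMap.zero_apply]
    unfold θ
    simp only [LinearMap.mulLeft_apply]
    rw [← mul_assoc, ι_sq_scalar]
    simp
  have hθθ : ∀ i j, θ i * θ j + θ j * θ i = 0 := by
    intro i j
    refine LinearMap.ext fun x => ?_
    simp only [LinearMap.add_apply, Module.End.mul_apply, LinearMap.zero_apply]
    unfold θ
    simp only [LinearMap.mulLeft_apply]
    have ho : (0 : QuadraticForm R (Fin n → R)).IsOrtho (Pi.single i 1) (Pi.single j 1) := by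
      simp [QuadraticMap.IsOrtho]
    rw [← mul_assoc, ← mul_assoc, ← add_mul, ι_mul_ι_add_swap_of_isOrtho ho, zero_mul]
  have hDD0 : ∀ i, Dop i * Dop i = 0 := by
    intro i
    refine LinearMap.ext fun x => ?_
    simp only [Module.End.mul_apply, LinearMap.zero_apply]
    unfold Dop
    rw [contractLeft_contractLeft]
  have hDD : ∀ i j, Dop i * Dop j + Dop j * Dop i = 0 := by
    intro i j
    refine LinearMap.ext fun x => ?_
    simp only [LinearMap.add_apply, Module.End.mul_apply, LinearMap.zero_apply]
    unfold Dop
    rw [contractLeft_comm]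
    exact neg_add_cancel _
  have hcoord : ∀ (i : Fin n) (v : Fin n → R), (Pi.basisFun R (Fin n)).coord i v = v i := by
    intro i v; simp
  have hDθ : ∀ i j, Dop i * θ j + θ j * Dop i = ((Pi.single j 1 : Fin n → R) i) • 1 := by
    intro i j
    refine LinearMap.ext fun x => ?_
    simp only [LinearMap.add_apply, Module.End.mul_apply, LinearMap.smul_apply,
      Module.End.one_apply]
    unfold Dop θ
    simp only [LinearMap.mulLeft_apply]
    rw [contractLeft_ι_mul, sub_add_cancel, hcoord]
  have hDbar_def : ∀ i, Dbar i = Dop i - algebraMap k R (a i) • θ i := fun i => rfl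
  have hDbarD : ∀ i j, Dop j * Dbar i + Dbar i * Dop j
      = -((algebraMap k R (a i) * (Pi.single i 1 : Fin n → R) j) • 1) := by
    intro i j
    rw [hDbar_def i, mul_sub, sub_mul, mul_smul_comm, smul_mul_assoc, sub_add_sub_comm,
      hDD j i, ← smul_add, hDθ j i, smul_smul, zero_sub]
  have hDbarθ : ∀ i j, θ j * Dbar i + Dbar i * θ j = ((Pi.single j 1 : Fin n → R) i) • 1 := by
    intro i j
    rw [hDbar_def i, mul_sub, sub_mul, mul_smul_comm, smul_mul_assoc, sub_add_sub_comm,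
      add_comm (θ j * Dop i), hDθ i j, ← smul_add, hθθ j i, smul_zero, sub_zero]
  have hexp : ∀ (A B C D : Module.End R E) (b d : R), (A - b • B) * (C - d • D)
      = A*C - d•(A*D) - b•(B*C) + (b*d)•(B*D) :=
    fun A B C D b d => smul_sub_mul_expand A B C D b d
  refine ⟨?_, ?_, ?_, ?_⟩
  · -- cycle condition
    intro i
    have hsum : δ = ∑ j, ((MvPowerSeries.X j : R) • Dop j +
        (algebraMap k R (a j) * MvPowerSeries.X j) • θ j) := rfl
    rw [hsum, Finset.sum_mul, Finset.mul_sum, ← Finset.sum_add_distrib]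
    refine Finset.sum_eq_zero fun j _ => ?_
    rw [add_mul, mul_add, smul_mul_assoc, smul_mul_assoc, mul_smul_comm, mul_smul_comm,
      add_add_add_comm, ← smul_add, ← smul_add, hDbarD i j, hDbarθ i j, smul_neg, smul_smul,
      smul_smul, ← neg_smul, ← add_smul]
    convert zero_smul R (1 : Module.End R E) using 2
    rcases eq_or_ne j i with rfl | hne
    · simp only [Pi.single_eq_same]
      ring
    · rw [Pi.single_eq_of_ne hne, Pi.single_eq_of_ne hne.symm]
      ring
  · -- square
    intro i
    rw [hDbar_def i, hexp, hDD0 i, hθθ0 i, smul_zero, add_zero,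
      zero_sub, sub_eq_add_neg, ← neg_add, ← smul_add, hDθ i i, Pi.single_eq_same, one_smul,
      map_neg]
    exact (neg_smul _ _).symm
  · -- anticommute
    intro i j hij
    rw [eq_neg_iff_add_eq_zero]
    have h0 : ((Pi.single j 1 : Fin n → R) i) = 0 := Pi.single_eq_of_ne hij 1
    have h0' : ((Pi.single i 1 : Fin n → R) j) = 0 := Pi.single_eq_of_ne hij.symm 1
    have sDD : Dop j * Dop i = -(Dop i * Dop j) := eq_neg_of_add_eq_zero_left (hDD j i)
    have hdθ1 : Dop i * θ j + θ j * Dop i = 0 := by rw [hDθ i j, h0, zero_smul]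
    have hdθ2 : Dop j * θ i + θ i * Dop j = 0 := by rw [hDθ j i, h0', zero_smul]
    have sθD : θ j * Dop i = -(Dop i * θ j) := eq_neg_of_add_eq_zero_left (by rw [add_comm]; exact hdθ1)
    have sDθ : Dop j * θ i = -(θ i * Dop j) := eq_neg_of_add_eq_zero_left hdθ2
    have sθθ : θ j * θ i = -(θ i * θ j) := eq_neg_of_add_eq_zero_left (hθθ j i)
    rw [hDbar_def i, hDbar_def j, hexp, hexp, sDD, sθD, sDθ,
      sθθ, mul_comm (algebraMap k R (a j)) (algebraMap k R (a i))]
    simp only [smul_neg]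
    abel
  · exact exists_clifford_embedding k R n a (MvPowerSeries.coeff (R := k) 0)
      (by rw [MvPowerSeries.coeff_zero_eq_constantCoeff_apply]; exact map_one _)
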